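/- For every graph G, the zero forcing number is at least the path cover number: Z(G) ≥ pc(G). -/

import Mathlib

/-- The forcing process: vertices that eventually get colored starting from `S`.
A colored vertex with exactly one uncolored neighbor forces that neighbor. -/
inductive SimpleGraph.Forced {V : Type*} (G : SimpleGraph V) (S : Set V) : V → Prop
  | init (v : V) (hv : v ∈ S) : SimpleGraph.Forced G S v
  | force (u w : V) (hu : SimpleGraph.Forced G S u) (hadj : G.Adj u w)
      (huniq : ∀ x, G.Adj u x → x ≠ w → SimpleGraph.Forced G S x) :
      SimpleGraph.Forced G S w

/-- `S` is a zero forcing set if the forcing process colors every vertex. -/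
def SimpleGraph.IsZeroForcingSet {V : Type*} (G : SimpleGraph V) (S : Set V) : Prop :=
  ∀ v, G.Forced S v

/-- The zero forcing number `Z(G)`. -/
noncomputable def SimpleGraph.zeroForcingNumber {V : Type*} (G : SimpleGraph V) : ℕ :=
  sInf {n | ∃ S : Set V, G.IsZeroForcingSet S ∧ S.ncard = n}

/-- A total forcing set: a zero forcing set inducing a subgraph without isolated vertices. -/
def SimpleGraph.IsTotalForcingSet {V : Type*} (G : SimpleGraph V) (S : Set V) : Prop :=
  G.IsZeroForcingSet S ∧ ∀ v ∈ S, ∃ u ∈ S, G.Adj v u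

/-- The total forcing number `F_t(G)`. -/
noncomputable def SimpleGraph.totalForcingNumber {V : Type*} (G : SimpleGraph V) : ℕ :=
  sInf {n | ∃ S : Set V, G.IsTotalForcingSet S ∧ S.ncard = n}

/-- A set of vertices that is the vertex set of a path (as a subgraph) of `G`. -/
def SimpleGraph.IsPathSet {V : Type*} (G : SimpleGraph V) (P : Set V) : Prop :=
  ∃ (u v : V) (w : G.Walk u v), w.IsPath ∧ {x | x ∈ w.support} = P

/-- A path cover: a collection of vertex-disjoint paths partitioning the vertex set. -/
def SimpleGraph.IsPathCover {V : Type*} (G : SimpleGraph V) (P : Set (Set V)) : Prop :=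
  (∀ Q ∈ P, G.IsPathSet Q) ∧ P.PairwiseDisjoint id ∧ ⋃₀ P = Set.univ

/-- The path cover number `pc(G)`. -/
noncomputable def SimpleGraph.pathCoverNumber {V : Type*} (G : SimpleGraph V) : ℕ :=
  sInf {n | ∃ P : Set (Set V), G.IsPathCover P ∧ P.ncard = n}

/-- The matching number `α'(G)`. -/
noncomputable def SimpleGraph.matchingNumber {V : Type*} (G : SimpleGraph V) : ℕ :=
  sSup {n | ∃ M : G.Subgraph, M.IsMatching ∧ M.edgeSet.ncard = n}

/-- A leaf is a vertex with exactly one neighbor. -/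
def SimpleGraph.IsLeaf {V : Type*} (G : SimpleGraph V) (v : V) : Prop :=
  (G.neighborSet v).ncard = 1


namespace ZFaux
open SimpleGraph

variable {V : Type*} {G : SimpleGraph V}

/-- Monotonicity of the forcing closure. -/
lemma forced_mono {S C : Set V} (hSC : S ⊆ C) {v : V} (h : G.Forced S v) : G.Forced C v := by
  induction h with
  | init v hv => exact .init v (hSC hv)
  | force u w hu hadj huniq ihu ih => exact .force u w ihu hadj (fun x hx hxw => ih x hx hxw)

/-- If the closure of `C` is everything but `C` isn't, there is a one-step force from `C`. -/
lemma exists_step {C : Set V} (hC : ∀ v, G.Forced C v) (hne : C ≠ Set.univ) :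
    ∃ u w, u ∈ C ∧ w ∉ C ∧ G.Adj u w ∧ ∀ x, G.Adj u x → x ≠ w → x ∈ C := by
  by_contra h
  push_neg at h
  have key : ∀ v, G.Forced C v → v ∈ C := by
    intro v hv
    induction hv with
    | init v hv => exact hv
    | force u w hu hadj huniq ihu ih =>
      by_contra hwC
      obtain ⟨x, hx, hxw, hxC⟩ := h u w ihu hwC hadj
      exact hxC (ih x hx hxw)
  apply hne
  ext v
  simp only [Set.mem_univ, iff_true]
  exact key v (hC v)

/-- The invariant: a family of forcing chains indexed by `S` covering `C`. -/
structure Good (G : SimpleGraph V) (S C : Set V) (f : V → List V) : Prop where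
  head : ∀ s ∈ S, (f s).head? = some s
  chain : ∀ s ∈ S, (f s).Chain' G.Adj
  nodup : ∀ s ∈ S, (f s).Nodup
  disj : ∀ s ∈ S, ∀ t ∈ S, s ≠ t → ∀ v ∈ f s, v ∉ f t
  cover : ∀ v, v ∈ C ↔ ∃ s ∈ S, v ∈ f s
  closed : ∀ s ∈ S, ∀ v ∈ (f s).dropLast, ∀ x, G.Adj v x → x ∈ C

lemma good_extend {S C : Set V} {f : V → List V} (hg : Good G S C f)
    {u w : V} (hu : u ∈ C) (hw : w ∉ C) (hadj : G.Adj u w)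
    (hstep : ∀ x, G.Adj u x → x ≠ w → x ∈ C) :
    ∃ g, Good G S (insert w C) g := by
  classical
  obtain ⟨s, hsS, hus⟩ := (hg.cover u).mp hu
  have hne : f s ≠ [] := by intro h; simp [h] at hus
  -- u is the last vertex of its chain
  have hlast : (f s).getLast hne = u := by
    have hdecomp : (f s).dropLast ++ [(f s).getLast hne] = f s := List.dropLast_append_getLast hne
    rcases (by rw [← hdecomp] at hus; exact List.mem_append.mp hus) with h1 | h1
    · exact absurd (hg.closed s hsS u h1 w hadj) hw
    · exact (List.mem_singleton.mp h1).symm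
  refine ⟨fun t => if t = s then f s ++ [w] else f t, ?_⟩
  have hmemC : ∀ x ∈ f s, x ∈ C := fun x hx => (hg.cover x).mpr ⟨s, hsS, hx⟩
  have hwfs : w ∉ f s := fun h => hw (hmemC w h)
  constructor
  · intro t htS
    by_cases h : t = s
    · subst h
      rcases hfs : f t with _ | ⟨a, l⟩
      · exact absurd hfs (by intro h; have := hg.head t htS; simp [h] at this)
      · have := hg.head t htS
        rw [hfs] at this
        simp at this ⊢
        simpa using this
    · simpa [h] using hg.head t htS
  · intro t htS
    by_cases h : t = s
    · subst h
      rw [if_pos rfl]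
      simp only [List.Chain']
      rw [List.isChain_append]
      refine ⟨hg.chain t htS, List.isChain_singleton w, ?_⟩
      intro x hx y hy
      rw [List.getLast?_eq_getLast hne] at hx
      simp at hx hy
      rw [← hx, ← hy, hlast]
      exact hadj
    · simpa [h] using hg.chain t htS
  · intro t htS
    by_cases h : t = s
    · subst h
      rw [if_pos rfl]
      rw [List.nodup_append]
      exact ⟨hg.nodup t htS, List.nodup_singleton w, by
        intro x hx y hy
        simp at hy
        subst hy
        exact fun h => hwfs (h ▸ hx)⟩
    · simpa [h] using hg.nodup t htS
  · intro t htS t' ht'S hne' v hv hv'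
    have hmem : ∀ r (hr : r ∈ S) x, x ∈ (if r = s then f s ++ [w] else f r) → x ∈ f r ∨ (x = w ∧ r = s) := by
      intro r hr x hx
      by_cases h : r = s
      · subst h; simp at hx
        rcases hx with hx | hx
        · exact Or.inl hx
        · exact Or.inr ⟨hx, rfl⟩
      · rw [if_neg h] at hx; exact Or.inl hx
    rcases hmem t htS v hv with h1 | ⟨h1, h1'⟩ <;> rcases hmem t' ht'S v hv' with h2 | ⟨h2, h2'⟩
    · exact hg.disj t htS t' ht'S hne' v h1 h2
    · subst h2; exact hw ((hg.cover v).mpr ⟨t, htS, h1⟩)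
    · subst h1; exact hw ((hg.cover v).mpr ⟨t', ht'S, h2⟩)
    · exact hne' (h1'.trans h2'.symm)
  · intro v
    constructor
    · intro hv
      rcases Set.mem_insert_iff.mp hv with h | h
      · exact ⟨s, hsS, by simp [h]⟩
      · obtain ⟨t, htS, hvt⟩ := (hg.cover v).mp h
        refine ⟨t, htS, ?_⟩
        by_cases ht : t = s
        · rw [if_pos ht]
          exact List.mem_append.mpr (Or.inl (ht ▸ hvt))
        · rw [if_neg ht]
          exact hvt
    · rintro ⟨t, htS, hvt⟩
      by_cases ht : t = s
      · subst ht
        simp at hvt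
        rcases hvt with h | h
        · exact Set.mem_insert_iff.mpr (Or.inr (hmemC v h))
        · exact h ▸ Set.mem_insert w C
      · rw [if_neg ht] at hvt
        exact Set.mem_insert_iff.mpr (Or.inr ((hg.cover v).mpr ⟨t, htS, hvt⟩))
  · intro t htS v hv x hxadj
    by_cases ht : t = s
    · subst ht
      rw [if_pos rfl, List.dropLast_concat] at hv
      have hdecomp : (f t).dropLast ++ [(f t).getLast hne] = f t := List.dropLast_append_getLast hne
      rcases (by rw [← hdecomp] at hv; exact List.mem_append.mp hv) with h1 | h1
      · exact Set.mem_insert_iff.mpr (Or.inr (hg.closed t htS v h1 x hxadj))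
      · have hvu : v = u := hlast ▸ (List.mem_singleton.mp h1)
        subst hvu
        by_cases hxw : x = w
        · exact hxw ▸ Set.mem_insert w C
        · exact Set.mem_insert_iff.mpr (Or.inr (hstep x hxadj hxw))
    · rw [if_neg ht] at hv
      exact Set.mem_insert_iff.mpr (Or.inr (hg.closed t htS v hv x hxadj))

lemma good_univ [Fintype V] {S : Set V} (hS : G.IsZeroForcingSet S) :
    ∃ f : V → List V, Good G S Set.univ f := by
  classical
  suffices h : ∀ n (C : Set V) (f : V → List V), S ⊆ C → Good G S C f →
      (Set.univ \ C).ncard ≤ n → ∃ g, Good G S Set.univ g by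
    refine h (Set.univ \ S).ncard S (fun v => [v]) le_rfl ?_ le_rfl
    constructor
    · intro s _; rfl
    · intro s _; exact List.isChain_singleton s
    · intro s _; exact List.nodup_singleton s
    · intro s _ t _ hst v hv hv'
      simp at hv hv'; exact hst (hv.symm.trans hv')
    · intro v
      constructor
      · intro hv; exact ⟨v, hv, by simp⟩
      · rintro ⟨s, hsS, hv⟩; simp at hv; exact hv ▸ hsS
    · intro s _ v hv; simp at hv
  intro n
  induction n with
  | zero =>
    intro C f hSC hg hcard
    have : Set.univ \ C = ∅ := by
      have := Set.ncard_eq_zero (Set.toFinite _) |>.mp (Nat.le_zero.mp hcard)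
      exact this
    have hCuniv : C = Set.univ := by
      rw [Set.diff_eq_empty] at this
      exact le_antisymm (Set.subset_univ C) this
    exact ⟨f, hCuniv ▸ hg⟩
  | succ n ih =>
    intro C f hSC hg hcard
    by_cases hCuniv : C = Set.univ
    · exact ⟨f, hCuniv ▸ hg⟩
    · have hforced : ∀ v, G.Forced C v := fun v => forced_mono hSC (hS v)
      obtain ⟨u, w, hu, hw, hadj, hstep⟩ := exists_step hforced hCuniv
      obtain ⟨g, hg'⟩ := good_extend hg hu hw hadj hstep
      refine ih (insert w C) g (hSC.trans (Set.subset_insert w C)) hg' ?_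
      have hwmem : w ∈ Set.univ \ C := ⟨Set.mem_univ w, hw⟩
      have h1 : Set.univ \ insert w C = (Set.univ \ C) \ {w} := by
        ext x
        simp only [Set.mem_diff, Set.mem_insert_iff, Set.mem_univ, Set.mem_singleton_iff, true_and]
        tauto
      rw [h1, Set.ncard_diff_singleton_of_mem hwmem]
      omega

/-- From a chain, build a walk. -/
lemma exists_walk : ∀ (l : List V) (a : V), List.Chain G.Adj a l →
    ∃ (b : V) (w : G.Walk a b), w.support = a :: l := by
  intro l
  induction l with
  | nil => exact fun a _ => ⟨a, SimpleGraph.Walk.nil, rfl⟩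
  | cons c t ih =>
    intro a h
    simp only [List.Chain, List.chain_cons] at h
    obtain ⟨b, w, hw⟩ := ih c h.2
    exact ⟨b, SimpleGraph.Walk.cons h.1 w, by simp [hw]⟩

lemma pathSet_of_chain {l : List V} (hne : l ≠ []) (hc : l.Chain' G.Adj) (hn : l.Nodup) :
    G.IsPathSet {x | x ∈ l} := by
  rcases l with _ | ⟨a, t⟩
  · exact absurd rfl hne
  · obtain ⟨b, w, hw⟩ := exists_walk t a hc
    exact ⟨a, b, w, by rw [SimpleGraph.Walk.isPath_def, hw]; exact hn, by rw [hw]⟩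

lemma key [Fintype V] {S : Set V} (hS : G.IsZeroForcingSet S) :
    ∃ P : Set (Set V), G.IsPathCover P ∧ P.ncard ≤ S.ncard := by
  classical
  obtain ⟨f, hg⟩ := good_univ hS
  refine ⟨(fun s => {x | x ∈ f s}) '' S, ⟨?_, ?_, ?_⟩, ?_⟩
  · rintro Q ⟨s, hsS, rfl⟩
    have hne : f s ≠ [] := by intro h; have := hg.head s hsS; simp [h] at this
    exact pathSet_of_chain hne (hg.chain s hsS) (hg.nodup s hsS)
  · rintro Q1 ⟨s, hsS, rfl⟩ Q2 ⟨t, htS, rfl⟩ hne12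
    have hst : s ≠ t := by rintro rfl; exact hne12 rfl
    exact Set.disjoint_left.mpr (fun v hv hv' => hg.disj s hsS t htS hst v hv hv')
  · ext v
    simp only [Set.mem_sUnion, Set.mem_univ, iff_true]
    obtain ⟨s, hsS, hv⟩ := (hg.cover v).mp (Set.mem_univ v)
    exact ⟨{x | x ∈ f s}, ⟨s, hsS, rfl⟩, hv⟩
  · exact Set.ncard_image_le (Set.toFinite S)

end ZFaux

theorem stmt6 {V : Type*} [Fintype V] (G : SimpleGraph V) :
    G.pathCoverNumber ≤ G.zeroForcingNumber := by
  have hne : (Set.univ : Set V).ncard ∈ {n | ∃ S : Set V, G.IsZeroForcingSet S ∧ S.ncard = n} :=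
    ⟨Set.univ, fun v => .init v (Set.mem_univ v), rfl⟩
  obtain ⟨S, hS, hcard⟩ := Nat.sInf_mem ⟨_, hne⟩
  obtain ⟨P, hP, hPle⟩ := ZFaux.key hS
  calc G.pathCoverNumber ≤ P.ncard := Nat.sInf_le ⟨P, hP, rfl⟩
    _ ≤ S.ncard := hPle
    _ = G.zeroForcingNumber := hcard
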